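/- Let H₁,...,Hₙ be complex Hilbert spaces and A = (A_{jk}) an upper triangular n×n operator matrix on H = ⊕Hᵢ (A_{jk} = 0 for j > k). Then w(A) ≥ max{w(A_{kk}), ‖A_{ij}‖/2 : 1 ≤ k ≤ n, 1 ≤ i < j ≤ n}, where ‖·‖ is the operator norm. -/

import Mathlib

open scoped InnerProductSpace

/-- Numerical radius of a bounded linear operator on a complex inner product space. -/
noncomputable def numRadius {E : Type*} [NormedAddCommGroup E] [InnerProductSpace ℂ E]
    (T : E →L[ℂ] E) : ℝ :=
  sSup {r : ℝ | ∃ x : E, ‖x‖ = 1 ∧ r = ‖⟪T x, x⟫_ℂ‖}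

/-- Numerical-radius orthogonality: `T ⊥_w A`. -/
def nrOrth {E : Type*} [NormedAddCommGroup E] [InnerProductSpace ℂ E]
    (T A : E →L[ℂ] E) : Prop :=
  ∀ l : ℂ, numRadius T ≤ numRadius (T + l • A)


lemma numSet_bddAbove {E : Type*} [NormedAddCommGroup E] [InnerProductSpace ℂ E]
    (T : E →L[ℂ] E) : BddAbove {r : ℝ | ∃ x : E, ‖x‖ = 1 ∧ r = ‖⟪T x, x⟫_ℂ‖} := by
  refine ⟨‖T‖, ?_⟩
  rintro r ⟨x, hx, rfl⟩
  calc ‖⟪T x, x⟫_ℂ‖ ≤ ‖T x‖ * ‖x‖ := norm_inner_le_norm _ _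
    _ ≤ ‖T‖ * ‖x‖ * ‖x‖ := by gcongr; exact T.le_opNorm x
    _ = ‖T‖ := by rw [hx]; ring

lemma numRadius_nonneg {E : Type*} [NormedAddCommGroup E] [InnerProductSpace ℂ E]
    (T : E →L[ℂ] E) : 0 ≤ numRadius T :=
  Real.sSup_nonneg (by rintro r ⟨x, hx, rfl⟩; positivity)

lemma le_numRadius {E : Type*} [NormedAddCommGroup E] [InnerProductSpace ℂ E]
    (T : E →L[ℂ] E) (z : E) (hz : ‖z‖ = 1) : ‖⟪T z, z⟫_ℂ‖ ≤ numRadius T :=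
  le_csSup (numSet_bddAbove T) ⟨z, hz, rfl⟩

theorem stmt19 {n : ℕ} {H : Fin n → Type*} [∀ i, NormedAddCommGroup (H i)]
    [∀ i, InnerProductSpace ℂ (H i)] [∀ i, CompleteSpace (H i)]
    (A : ∀ j k, H k →L[ℂ] H j)
    (htri : ∀ j k, k < j → A j k = 0)
    (S : PiLp 2 H →L[ℂ] PiLp 2 H)
    (hS : ∀ z : PiLp 2 H, ∀ j, (WithLp.equiv 2 (∀ i, H i)) (S z) j =
      ∑ k, A j k ((WithLp.equiv 2 (∀ i, H i)) z k)) :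
    (∀ k, numRadius (A k k) ≤ numRadius S) ∧
      ∀ i j : Fin n, i < j → ‖A i j‖ / 2 ≤ numRadius S := by
  classical
  have hinner : ∀ f : ∀ i, H i,
      ⟪S ((WithLp.equiv 2 (∀ i, H i)).symm f), (WithLp.equiv 2 (∀ i, H i)).symm f⟫_ℂ
        = ∑ r, ∑ k, ⟪A r k (f k), f r⟫_ℂ := by
    intro f
    rw [PiLp.inner_apply]
    refine Finset.sum_congr rfl fun r _ => ?_
    have h1 := hS ((WithLp.equiv 2 (∀ i, H i)).symm f) r
    simp only [WithLp.equiv_symm_apply, WithLp.equiv_apply, PiLp.toLp_apply] at h1 ⊢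
    rw [h1, sum_inner]
  have hnorm : ∀ f : ∀ i, H i,
      ‖(WithLp.equiv 2 (∀ i, H i)).symm f‖ ^ 2 = ∑ r, ‖f r‖ ^ 2 := by
    intro f
    rw [PiLp.norm_sq_eq_of_L2]
    simp [WithLp.equiv_symm_apply]
  constructor
  · -- diagonal part
    intro k
    refine Real.sSup_le ?_ (numRadius_nonneg S)
    rintro r ⟨x, hx, rfl⟩
    set z := (WithLp.equiv 2 (∀ i, H i)).symm (Pi.single k x) with hzdef
    have hz : ‖z‖ = 1 := by
      have h2 : ‖z‖ ^ 2 = 1 := by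
        rw [hzdef, hnorm]
        rw [Finset.sum_eq_single k]
        · rw [Pi.single_eq_same, hx]; norm_num
        · intro b _ hb; rw [Pi.single_eq_of_ne hb]; simp
        · simp
      have := norm_nonneg z
      nlinarith
    have hv : ⟪S z, z⟫_ℂ = ⟪(A k k) x, x⟫_ℂ := by
      rw [hzdef, hinner]
      rw [Finset.sum_eq_single k]
      · rw [Finset.sum_eq_single k]
        · rw [Pi.single_eq_same]
        · intro b _ hb; rw [Pi.single_eq_of_ne hb]; simp
        · simp
      · intro b _ hb
        rw [Pi.single_eq_of_ne hb]
        simp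
      · simp
    calc ‖⟪(A k k) x, x⟫_ℂ‖ = ‖⟪S z, z⟫_ℂ‖ := by rw [hv]
      _ ≤ numRadius S := le_numRadius S z hz
  · -- off-diagonal part
    intro i j hij
    have hij' : i ≠ j := ne_of_lt hij
    have hST : ∀ (a : H i) (b : H j),
        ⟪S ((WithLp.equiv 2 (∀ i, H i)).symm (Pi.single i a + Pi.single j b)),
          (WithLp.equiv 2 (∀ i, H i)).symm (Pi.single i a + Pi.single j b)⟫_ℂ
        = ⟪(A i i) a, a⟫_ℂ + ⟪(A i j) b, a⟫_ℂ + ⟪(A j j) b, b⟫_ℂ := by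
      intro a b
      rw [hinner]
      set f : ∀ i, H i := Pi.single i a + Pi.single j b with hf
      have hfk : ∀ r : Fin n, (∑ k, ⟪A r k (f k), f r⟫_ℂ)
          = ⟪A r i a, f r⟫_ℂ + ⟪A r j b, f r⟫_ℂ := by
        intro r
        have : ∀ k, ⟪A r k (f k), f r⟫_ℂ
            = ⟪A r k (Pi.single i a k), f r⟫_ℂ + ⟪A r k (Pi.single j b k), f r⟫_ℂ := by
          intro k; rw [hf]; simp [inner_add_left]; ring
        rw [Finset.sum_congr rfl fun k _ => this k, Finset.sum_add_distrib]
        congr 1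
        · rw [Finset.sum_eq_single i]
          · rw [Pi.single_eq_same]
          · intro b' _ hb; rw [Pi.single_eq_of_ne hb]; simp
          · simp
        · rw [Finset.sum_eq_single j]
          · rw [Pi.single_eq_same]
          · intro b' _ hb; rw [Pi.single_eq_of_ne hb]; simp
          · simp
      rw [Finset.sum_congr rfl fun r _ => hfk r]
      have hzero : ∀ r ∈ Finset.univ \ ({i, j} : Finset (Fin n)),
          ⟪A r i a, f r⟫_ℂ + ⟪A r j b, f r⟫_ℂ = 0 := by
        intro r hr
        simp only [Finset.mem_sdiff, Finset.mem_insert, Finset.mem_singleton] at hr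
        push_neg at hr
        have hfr : f r = 0 := by
          rw [hf]; simp [Pi.single_eq_of_ne hr.2.1, Pi.single_eq_of_ne hr.2.2]
        rw [hfr, inner_zero_right, inner_zero_right, add_zero]
      have hsum : (∑ r, (⟪A r i a, f r⟫_ℂ + ⟪A r j b, f r⟫_ℂ))
          = ∑ r ∈ ({i, j} : Finset (Fin n)), (⟪A r i a, f r⟫_ℂ + ⟪A r j b, f r⟫_ℂ) := by
        refine (Finset.sum_subset (Finset.subset_univ _) ?_).symm
        intro r _ hr
        exact hzero r (by simpa using hr)
      rw [hsum, Finset.sum_pair hij']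
      have hfi : f i = a := by rw [hf]; simp [Pi.single_eq_same, Pi.single_eq_of_ne hij']
      have hfj : f j = b := by rw [hf]; simp [Pi.single_eq_same, Pi.single_eq_of_ne hij'.symm]
      rw [hfi, hfj, htri j i hij]
      simp only [ContinuousLinearMap.zero_apply, inner_zero_left]
      ring
    have hNT : ∀ (a : H i) (b : H j),
        ‖(WithLp.equiv 2 (∀ i, H i)).symm (Pi.single i a + Pi.single j b)‖ ^ 2
          = ‖a‖ ^ 2 + ‖b‖ ^ 2 := by
      intro a b
      rw [hnorm]
      have key : ∀ r : Fin n, ‖(Pi.single i a + Pi.single j b) r‖ ^ 2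
          = Pi.single (M := fun _ => ℝ) i (‖a‖ ^ 2) r
            + Pi.single (M := fun _ => ℝ) j (‖b‖ ^ 2) r := by
        intro r
        by_cases hr : r = i
        · subst hr
          simp [Pi.single_eq_same, Pi.single_eq_of_ne hij', Pi.single_eq_of_ne hij'.symm]
        · by_cases hr' : r = j
          · subst hr'
            simp [Pi.single_eq_same, Pi.single_eq_of_ne hij'.symm, hr]
          · simp [Pi.single_eq_of_ne hr, Pi.single_eq_of_ne hr']
      rw [Finset.sum_congr rfl fun r _ => key r, Finset.sum_add_distrib,
        Finset.sum_pi_single', Finset.sum_pi_single']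
      simp
    have hkey : ∀ (x : H j) (y : H i), ‖x‖ = 1 → ‖y‖ = 1 →
        ‖⟪(A i j) x, y⟫_ℂ‖ ≤ 2 * numRadius S := by
      intro x y hx hy
      set t : ℝ := (Real.sqrt 2)⁻¹ with ht
      have ht2 : t * t = 1 / 2 := by
        rw [ht, ← mul_inv, Real.mul_self_sqrt (by norm_num : (0:ℝ) ≤ 2)]
        norm_num
      have ht0 : 0 ≤ t := by positivity
      set c : ℂ := (t : ℂ) with hc
      have hcc : (starRingEnd ℂ) c = c := Complex.conj_ofReal t
      have hc2 : c * c = 1 / 2 := by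
        rw [hc, ← Complex.ofReal_mul, ht2]; norm_num
      have hcn : ‖c‖ = t := by
        rw [hc, Complex.norm_real, Real.norm_eq_abs, abs_of_nonneg ht0]
      have hznorm : ∀ (s : ℂ), ‖s‖ = t →
          ‖(WithLp.equiv 2 (∀ i, H i)).symm (Pi.single i (s • y) + Pi.single j (c • x))‖ = 1 := by
        intro s hs
        have h2 : ‖(WithLp.equiv 2 (∀ i, H i)).symm
            (Pi.single i (s • y) + Pi.single j (c • x))‖ ^ 2 = 1 := by
          rw [hNT, norm_smul, norm_smul, hs, hx, hy, hcn]
          nlinarith [ht2]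
        nlinarith [norm_nonneg ((WithLp.equiv 2 (∀ i, H i)).symm
          (Pi.single i (s • y) + Pi.single j (c • x)))]
      set zp := (WithLp.equiv 2 (∀ i, H i)).symm
        (Pi.single i (c • y) + Pi.single j (c • x)) with hzp
      set zm := (WithLp.equiv 2 (∀ i, H i)).symm
        (Pi.single i ((-c) • y) + Pi.single j (c • x)) with hzm
      have hzp1 : ‖zp‖ = 1 := hznorm c hcn
      have hzm1 : ‖zm‖ = 1 := hznorm (-c) (by rw [norm_neg, hcn])
      have hvp : ⟪S zp, zp⟫_ℂ = (1/2) * ⟪(A i i) y, y⟫_ℂ + (1/2) * ⟪(A i j) x, y⟫_ℂ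
          + (1/2) * ⟪(A j j) x, x⟫_ℂ := by
        rw [hzp, hST]
        simp only [map_smul, inner_smul_left, inner_smul_right, hcc]
        rw [← hc2]; ring
      have hvm : ⟪S zm, zm⟫_ℂ = (1/2) * ⟪(A i i) y, y⟫_ℂ - (1/2) * ⟪(A i j) x, y⟫_ℂ
          + (1/2) * ⟪(A j j) x, x⟫_ℂ := by
        rw [hzm, hST]
        simp only [map_smul, inner_smul_left, inner_smul_right, hcc, map_neg, neg_smul,
          inner_neg_left, inner_neg_right, inner_neg_neg]
        rw [← hc2]; ring
      have hdiff : ⟪(A i j) x, y⟫_ℂ = ⟪S zp, zp⟫_ℂ - ⟪S zm, zm⟫_ℂ := by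
        rw [hvp, hvm]; ring
      calc ‖⟪(A i j) x, y⟫_ℂ‖ = ‖⟪S zp, zp⟫_ℂ - ⟪S zm, zm⟫_ℂ‖ := by rw [hdiff]
        _ ≤ ‖⟪S zp, zp⟫_ℂ‖ + ‖⟪S zm, zm⟫_ℂ‖ := norm_sub_le _ _
        _ ≤ numRadius S + numRadius S :=
            add_le_add (le_numRadius S zp hzp1) (le_numRadius S zm hzm1)
        _ = 2 * numRadius S := by ring
    have hop : ‖A i j‖ ≤ 2 * numRadius S := by
      have h2w : (0:ℝ) ≤ 2 * numRadius S := by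
        have := numRadius_nonneg S; linarith
      refine ContinuousLinearMap.opNorm_le_bound _ h2w ?_
      intro x
      by_cases hx : x = 0
      · rw [hx, map_zero, norm_zero, norm_zero, mul_zero]
      · have hxn : (‖x‖ : ℂ) ≠ 0 := by
          simpa using norm_ne_zero_iff.mpr hx
        set u : H j := ((‖x‖ : ℂ))⁻¹ • x with hu
        have hu1 : ‖u‖ = 1 := by
          rw [hu, norm_smul, norm_inv, Complex.norm_real, Real.norm_eq_abs,
            abs_of_nonneg (norm_nonneg x), inv_mul_cancel₀ (norm_ne_zero_iff.mpr hx)]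
        have hxu : (A i j) x = (‖x‖ : ℂ) • (A i j) u := by
          rw [hu, map_smul, smul_smul, mul_inv_cancel₀ hxn, one_smul]
        have hnxu : ‖(A i j) x‖ = ‖x‖ * ‖(A i j) u‖ := by
          rw [hxu, norm_smul, Complex.norm_real, Real.norm_eq_abs,
            abs_of_nonneg (norm_nonneg x)]
        by_cases hBu : (A i j) u = 0
        · rw [hnxu, hBu, norm_zero, mul_zero]
          exact mul_nonneg h2w (norm_nonneg x)
        · set y : H i := ((‖(A i j) u‖ : ℂ))⁻¹ • (A i j) u with hy
          have hBn : (‖(A i j) u‖ : ℂ) ≠ 0 := by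
            simpa using norm_ne_zero_iff.mpr hBu
          have hy1 : ‖y‖ = 1 := by
            rw [hy, norm_smul, norm_inv, Complex.norm_real, Real.norm_eq_abs,
              abs_of_nonneg (norm_nonneg _), inv_mul_cancel₀ (norm_ne_zero_iff.mpr hBu)]
          have hval : ⟪(A i j) u, y⟫_ℂ = (‖(A i j) u‖ : ℂ) := by
            rw [hy, inner_smul_right, inner_self_eq_norm_sq_to_K]
            field_simp
            rfl
          have hb := hkey u y hu1 hy1
          rw [hval] at hb
          simp only [Complex.norm_real, Real.norm_eq_abs,
            abs_of_nonneg (norm_nonneg _)] at hb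
          rw [hnxu]
          nlinarith [norm_nonneg x, norm_nonneg ((A i j) u)]
    have := numRadius_nonneg S
    linarith
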